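/- Let c₁ = 20, c₂ = 35, c_Y = 249. Suppose the tree T on pairs ⟨j,r⟩ satisfies: if ⟨j',r+1⟩ is the parent of ⟨j,r⟩ then d(j,j') ≤ c₁·5^(r+1), and areas are nested along the tree (A(j,r) ⊆ A(j',r+1) when ⟨j',r+1⟩ is the parent of ⟨j,r⟩). Define Y(j,r) = ⋃{A(j'',r) : j'' ∈ J_r, d(j,j'') ≤ c_Y·5^r}. Then for any node ⟨j,r⟩ with parent ⟨j',r+1⟩, we have Y(j,r) ⊆ Y(j',r+1); consequently if ⟨j',r'⟩ is any ancestor of ⟨j,r⟩ in T then Y(j,r) ⊆ Y(j',r'). -/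

import Mathlib

/-- `Y` of a node is contained in `Y` of its parent, and hence in
`Y` of any ancestor. `parent j r` is the center of the parent (at level `r+1`)
of the node `⟨j,r⟩`. -/
theorem stmt_8 {V : Type*} [MetricSpace V]
    (c₁ c₂ cY : ℝ) (hc₁ : c₁ = 20) (hc₂ : c₂ = 35) (hcY : cY = 249)
    (J : ℤ → Set V) (A : V → ℤ → Set V) (parent : V → ℤ → V)
    -- parent properties: membership, distance bound, area nesting
    (hparent : ∀ (r : ℤ), ∀ j ∈ J r,
      parent j r ∈ J (r + 1) ∧
      dist j (parent j r) ≤ c₁ * (5 : ℝ) ^ (r + 1) ∧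
      A j r ⊆ A (parent j r) (r + 1)) :
    -- define Y(j,r) = ⋃ {A(j'',r) : j'' ∈ J r, d(j,j'') ≤ cY·5^r}; then
    (∀ (r : ℤ), ∀ j ∈ J r,
      (⋃ j'' ∈ {j'' ∈ J r | dist j j'' ≤ cY * (5 : ℝ) ^ r}, A j'' r) ⊆
        ⋃ j'' ∈ {j'' ∈ J (r + 1) |
          dist (parent j r) j'' ≤ cY * (5 : ℝ) ^ (r + 1)}, A j'' (r + 1)) ∧
    -- ancestor version: anc is the chain of iterated parents starting from j
    (∀ (r : ℤ), ∀ j ∈ J r, ∀ anc : ℕ → V, anc 0 = j →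
      (∀ k : ℕ, anc (k + 1) = parent (anc k) (r + k)) →
      ∀ k : ℕ,
        (⋃ j'' ∈ {j'' ∈ J r | dist j j'' ≤ cY * (5 : ℝ) ^ r}, A j'' r) ⊆
          ⋃ j'' ∈ {j'' ∈ J (r + k) |
            dist (anc k) j'' ≤ cY * (5 : ℝ) ^ (r + k)}, A j'' (r + k)) := by
  have step : ∀ (r : ℤ), ∀ j ∈ J r,
      (⋃ j'' ∈ {j'' ∈ J r | dist j j'' ≤ cY * (5 : ℝ) ^ r}, A j'' r) ⊆
        ⋃ j'' ∈ {j'' ∈ J (r + 1) |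
          dist (parent j r) j'' ≤ cY * (5 : ℝ) ^ (r + 1)}, A j'' (r + 1) := by
    intro r j hj x hx
    simp only [Set.mem_iUnion, Set.mem_setOf_eq, exists_prop] at hx ⊢
    obtain ⟨j'', ⟨hj'', hd⟩, hxA⟩ := hx
    obtain ⟨hp'', hdp'', hA''⟩ := hparent r j'' hj''
    obtain ⟨hp, hdp, _⟩ := hparent r j hj
    refine ⟨parent j'' r, ⟨hp'', ?_⟩, ?_⟩
    · have h5 : (0:ℝ) < (5:ℝ) ^ r := by positivity
      calc dist (parent j r) (parent j'' r)
          ≤ dist (parent j r) j + dist j j'' + dist j'' (parent j'' r) :=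
            dist_triangle4 _ _ _ _
        _ ≤ c₁ * (5 : ℝ) ^ (r + 1) + cY * (5 : ℝ) ^ r + c₁ * (5 : ℝ) ^ (r + 1) := by
            have := dist_comm (parent j r) j ▸ hdp
            linarith [hdp, hd, hdp'', dist_comm j (parent j r) ▸ hdp]
        _ ≤ cY * (5 : ℝ) ^ (r + 1) := by
            rw [zpow_add₀ (by norm_num : (5:ℝ) ≠ 0) r 1, hc₁, hcY]
            nlinarith
    · exact hA'' hxA
  refine ⟨step, ?_⟩
  intro r j hj anc h0 hsucc k
  induction k with
  | zero =>
    simp [h0]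
  | succ k ih =>
    have hanc : ∀ m : ℕ, anc m ∈ J (r + m) := by
      intro m
      induction m with
      | zero => simpa [h0] using hj
      | succ m ihm =>
        rw [hsucc m]
        have := (hparent (r + m) (anc m) ihm).1
        convert this using 2 <;> push_cast <;> ring
    have := step (r + k) (anc k) (hanc k)
    rw [← hsucc k] at this
    refine ih.trans ?_
    convert this using 4
    case e'_2 => rfl
    all_goals push_cast <;> ring_nf
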